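/- Let r ≥ 1, e ≥ 2 and s ∈ ℤ^r. If two r-multipartitions λ and μ satisfy (λ, s) ≈_e (μ, s) (i.e., they lie in the same block), then Ψ_r(λ, s) ≈_e Ψ_r(μ, s); that is, the Uglov map Ψ_r sends blocks into blocks. -/

import Mathlib

/-- A partition: a weakly decreasing sequence of non-negative integers,
eventually zero.  `part i` is the `(i+1)`-st part `λ_{i+1}`. -/
structure PartitionSeq where
  part : ℕ → ℕ
  antitone : ∀ i j : ℕ, i ≤ j → part j ≤ part i
  eventually_zero : ∃ N : ℕ, ∀ i : ℕ, N ≤ i → part i = 0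

/-- The empty partition. -/
def zeroPart : PartitionSeq := ⟨fun _ => 0, fun _ _ _ => le_rfl, ⟨0, fun _ _ => rfl⟩⟩

/-- A β-set: a set of integers containing all sufficiently small integers and
excluding all sufficiently large ones. -/
def IsBetaSet (B : Set ℤ) : Prop :=
  (∃ N : ℤ, ∀ z : ℤ, z < N → z ∈ B) ∧ (∃ M : ℤ, ∀ z : ℤ, M < z → z ∉ B)

/-- The β-set `B_s(λ) = {λ_i - i + s : i ≥ 1}`. -/
def betaSet (lam : PartitionSeq) (s : ℤ) : Set ℤ :=
  {b : ℤ | ∃ i : ℕ, b = (lam.part i : ℤ) - ((i : ℤ) + 1) + s}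

/-- `|λ|`, the sum of the parts of a partition. -/
noncomputable def psize (lam : PartitionSeq) : ℕ := ∑ᶠ i, lam.part i

/-- The pair `(λ, s)` corresponding to a β-set (junk value if none exists). -/
noncomputable def partOfBeta (B : Set ℤ) : PartitionSeq × ℤ :=
  letI := Classical.propDecidable (∃ p : PartitionSeq × ℤ, betaSet p.1 p.2 = B)
  if h : ∃ p : PartitionSeq × ℤ, betaSet p.1 p.2 = B then h.choose else (zeroPart, 0)

/-- The β-set `C_i` of runner `i`: the rows `m` with a bead at position `m*e+i`. -/
def quotSetB (e : ℕ) (B : Set ℤ) (i : ℕ) : Set ℤ :=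
  {m : ℤ | m * (e : ℤ) + (i : ℤ) ∈ B}

/-- `ρ_i`: the `i`-th component of the `e`-quotient of the configuration `B`. -/
noncomputable def rhoB (e : ℕ) (B : Set ℤ) (i : ℕ) : PartitionSeq :=
  (partOfBeta (quotSetB e B i)).1

/-- `t_i`: the charge of runner `i` of the configuration `B`. -/
noncomputable def tB (e : ℕ) (B : Set ℤ) (i : ℕ) : ℤ :=
  (partOfBeta (quotSetB e B i)).2

/-- `|ρ| = Σ_i |ρ_i|`, the size of the `e`-quotient of `B`. -/
noncomputable def wtB (e : ℕ) (B : Set ℤ) : ℕ :=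
  ∑ i ∈ Finset.range e, psize (rhoB e B i)

/-- `B` is a (`c`-shifted) Rouquier configuration: `wt ≤ t_{i+1} - t_i + c`
for all `0 ≤ i < e-1`.  `c = 1` gives Rouquier, `c = r` gives `r`-Rouquier. -/
def IsRouquierB (e : ℕ) (B : Set ℤ) (c : ℤ) : Prop :=
  ∀ i : ℕ, i + 1 < e → (wtB e B : ℤ) ≤ tB e B (i + 1) - tB e B i + c

/-- Uglov's map `ψ_k`: sends `me + i` (with `0 ≤ i < e`) to `((m+1)r - k)e + i`. -/
def psi (e r k x : ℤ) : ℤ := ((Int.ediv x e + 1) * r - k) * e + Int.emod x e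

/-- Uglov's map `Ψ_r` on β-sets: `⨆_{k=1}^r ψ_k(B_k)`. -/
def uglovSet (e r : ℕ) (B : Fin r → Set ℤ) : Set ℤ :=
  ⋃ k : Fin r, psi (e : ℤ) (r : ℤ) (((k : ℕ) : ℤ) + 1) '' B k

/-- The number of nodes of the Young diagram of `λ` with `e`-residue `j`
(for charge `0`). -/
noncomputable def resCount (e : ℕ) (lam : PartitionSeq) (j : ZMod e) : ℕ :=
  {p : ℕ × ℕ | p.2 < lam.part p.1 ∧ ((p.2 : ZMod e) - (p.1 : ZMod e) = j)}.ncard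

/-- The block relation `λ ∼_e μ` for partitions: equal size and equal
multisets of `e`-residues. -/
def SimE (e : ℕ) (lam mu : PartitionSeq) : Prop :=
  psize lam = psize mu ∧ ∀ j : ZMod e, resCount e lam j = resCount e mu j

/-- The number of nodes of the Young diagram of a multipartition with
`e`-residue `j`, for the multicharge `s`. -/
noncomputable def mresCount (e : ℕ) {r : ℕ} (lam : Fin r → PartitionSeq)
    (s : Fin r → ℤ) (j : ZMod e) : ℕ :=
  ∑ k : Fin r, {p : ℕ × ℕ |
    p.2 < (lam k).part p.1 ∧ ((s k : ZMod e) + (p.2 : ZMod e) - (p.1 : ZMod e) = j)}.ncard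

/-- The block relation `(λ, s) ≈_e (μ, s)` for multipartitions with the same
multicharge: equal size and equal multisets of `e`-residues. -/
def MSimE (e : ℕ) {r : ℕ} (lam mu : Fin r → PartitionSeq) (s : Fin r → ℤ) : Prop :=
  (∑ k, psize (lam k)) = (∑ k, psize (mu k)) ∧
    ∀ j : ZMod e, mresCount e lam s j = mresCount e mu s j

/-- The `e`-core abacus configuration of `B`: all beads pushed up on their
runners. -/
noncomputable def eCoreSet (e : ℕ) (B : Set ℤ) : Set ℤ :=
  {b : ℤ | ∃ i : ℕ, i < e ∧ ∃ m : ℤ, m < tB e B i ∧ b = m * (e : ℤ) + (i : ℤ)}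

/-- The `e`-core of `λ` (computed via the abacus with charge `s`). -/
noncomputable def eCore (e : ℕ) (lam : PartitionSeq) (s : ℤ) : PartitionSeq :=
  (partOfBeta (eCoreSet e (betaSet lam s))).1

/-- The `e`-weight of `λ`: `(|λ| - |e-core(λ)|)/e`. -/
noncomputable def eWeight (e : ℕ) (lam : PartitionSeq) (s : ℤ) : ℤ :=
  ((psize lam : ℤ) - (psize (eCore e lam s) : ℤ)) / (e : ℤ)

/-- Replace the bead at position `b` by a bead at position `c`. -/
def replaceBead (S : Set ℤ) (b c : ℤ) : Set ℤ := insert c (S \ {b})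

/-- Perform two bead replacements, `b₁ ↦ c₁` in component `k₁` and then
`b₂ ↦ c₂` in component `k₂`. -/
def twoBeadUpdate {ι : Type*} [DecidableEq ι] (B : ι → Set ℤ)
    (k₁ : ι) (b₁ c₁ : ℤ) (k₂ : ι) (b₂ c₂ : ℤ) : ι → Set ℤ :=
  Function.update (Function.update B k₁ (replaceBead (B k₁) b₁ c₁)) k₂
    (replaceBead (Function.update B k₁ (replaceBead (B k₁) b₁ c₁) k₂) b₂ c₂)

/-- Type-1 move at level `N`: decrease a β-number by `N` in component `k₁`
and increase a β-number by `N` in component `k₂`. -/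
def Move1 {ι : Type*} [DecidableEq ι] (N : ℤ) (B B' : ι → Set ℤ) : Prop :=
  ∃ k₁ k₂ : ι, ∃ b₁ b₂ : ℤ,
    b₁ ∈ B k₁ ∧ b₁ - N ∉ B k₁ ∧ b₂ ∈ B k₂ ∧ b₂ + N ∉ B k₂ ∧
    B' = twoBeadUpdate B k₁ b₁ (b₁ - N) k₂ b₂ (b₂ + N)

/-- Type-2 move at level `N`: for `b₁ ≡ b₂ (mod N)` and `h > 0`, replace `b₁`
by `b₁ + h` in component `k₁` and `b₂ + h` by `b₂` in component `k₂`. -/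
def Move2 {ι : Type*} [DecidableEq ι] (N : ℤ) (B B' : ι → Set ℤ) : Prop :=
  ∃ k₁ k₂ : ι, ∃ b₁ b₂ h : ℤ, 0 < h ∧ ((N : ℤ) ∣ b₁ - b₂) ∧
    b₁ ∈ B k₁ ∧ b₁ + h ∉ B k₁ ∧ b₂ ∉ B k₂ ∧ b₂ + h ∈ B k₂ ∧
    B' = twoBeadUpdate B k₁ b₁ (b₁ + h) k₂ (b₂ + h) b₂

/-- The block relation on tuples of abacus configurations: the reflexive
transitive closure of type-1 and type-2 moves at level `N`. -/
def BlockEq {ι : Type*} [DecidableEq ι] (N : ℤ) (B B' : ι → Set ℤ) : Prop :=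
  Relation.ReflTransGen (fun X Y => Move1 N X Y ∨ Move2 N X Y) B B'

/-- The stretching operation on a single abacus configuration: shift the
content of runner `i` by `M i`, leaving the `e`-quotient unchanged. -/
def strSet (e : ℕ) (M : ℕ → ℤ) (B : Set ℤ) : Set ℤ :=
  {b : ℤ | ∃ i : ℕ, i < e ∧ ∃ m : ℤ, m * (e : ℤ) + (i : ℤ) ∈ B ∧
    b = (m + M i) * (e : ℤ) + (i : ℤ)}

/-! ### Auxiliary machinery -/

def bseq (lam : PartitionSeq) (s : ℤ) (x : ℕ) : ℤ := (lam.part x : ℤ) - ((x : ℤ) + 1) + s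

lemma betaSet_eq_range (lam : PartitionSeq) (s : ℤ) :
    betaSet lam s = Set.range (bseq lam s) := by
  ext b; constructor
  · rintro ⟨i, rfl⟩; exact ⟨i, rfl⟩
  · rintro ⟨i, rfl⟩; exact ⟨i, rfl⟩

lemma bseq_strictAnti (lam : PartitionSeq) (s : ℤ) : StrictAnti (bseq lam s) := by
  apply strictAnti_nat_of_succ_lt
  intro n
  have := lam.antitone n (n+1) (by omega)
  unfold bseq
  push_cast
  omega

lemma bseq_zero {lam : PartitionSeq} {s : ℤ} {T x : ℕ}
    (hT : ∀ y, T ≤ y → lam.part y = 0) (hx : T ≤ x) :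
    bseq lam s x = s - 1 - x := by
  unfold bseq; rw [hT x hx]; push_cast; ring

lemma mem_betaSet_of_lt {lam : PartitionSeq} {s : ℤ} {T : ℕ}
    (hT : ∀ y, T ≤ y → lam.part y = 0) {w : ℤ} (hw : w < s - T) :
    w ∈ betaSet lam s := by
  rw [betaSet_eq_range]
  refine ⟨(s - 1 - w).toNat, ?_⟩
  have h1 : (T : ℤ) ≤ s - 1 - w := by omega
  have h2 : ((s - 1 - w).toNat : ℤ) = s - 1 - w := Int.toNat_of_nonneg (by omega)
  rw [bseq_zero hT (by omega), h2]
  ring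

lemma strictAnti_range_eq {f g : ℕ → ℤ} (hf : StrictAnti f) (hg : StrictAnti g)
    (h : Set.range f = Set.range g) : f = g := by
  have key : ∀ f g : ℕ → ℤ, StrictAnti f → StrictAnti g → Set.range f = Set.range g →
      ∀ n, ¬ f n < g n := by
    intro f g hf hg h n hlt
    have hsub : (Finset.range (n+1)).image g ⊆ (Finset.range n).image f := by
      intro y hy
      simp only [Finset.mem_image, Finset.mem_range] at hy ⊢
      obtain ⟨m, hm, rfl⟩ := hy
      have : g m ∈ Set.range f := h ▸ Set.mem_range_self m
      obtain ⟨p, hp⟩ := this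
      refine ⟨p, ?_, hp⟩
      have hfn : f n < f p := by rw [hp]; exact lt_of_lt_of_le hlt (hg.antitone (by omega))
      exact lt_of_not_ge fun hc => absurd hfn (not_lt.mpr (hf.antitone hc))
    have hc := Finset.card_le_card hsub
    rw [Finset.card_image_of_injective _ hg.injective,
      Finset.card_image_of_injective _ hf.injective,
      Finset.card_range, Finset.card_range] at hc
    omega
  funext n
  rcases lt_trichotomy (f n) (g n) with hlt | heq | hgt
  · exact absurd hlt (key f g hf hg h n)
  · exact heq
  · exact absurd hgt (key g f hg hf h.symm n)

lemma partitionSeq_ext {l m : PartitionSeq} (h : l.part = m.part) : l = m := by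
  cases l; cases m; simpa using h

lemma betaSet_inj {l m : PartitionSeq} {s t : ℤ}
    (h : betaSet l s = betaSet m t) : l = m ∧ s = t := by
  rw [betaSet_eq_range, betaSet_eq_range] at h
  have hb : bseq l s = bseq m t :=
    strictAnti_range_eq (bseq_strictAnti l s) (bseq_strictAnti m t) h
  obtain ⟨Tl, hTl⟩ := l.eventually_zero
  obtain ⟨Tm, hTm⟩ := m.eventually_zero
  have hst : s = t := by
    have h1 := congrFun hb (max Tl Tm)
    rw [bseq_zero hTl (le_max_left _ _), bseq_zero hTm (le_max_right _ _)] at h1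
    omega
  refine ⟨partitionSeq_ext (funext fun x => ?_), hst⟩
  have h2 := congrFun hb x
  unfold bseq at h2
  omega

lemma psize_eq_sum {lam : PartitionSeq} {T : ℕ} (hT : ∀ y, T ≤ y → lam.part y = 0) :
    psize lam = ∑ x ∈ Finset.range T, lam.part x := by
  apply finsum_eq_sum_of_support_subset
  intro x hx
  simp only [Function.mem_support] at hx
  simp only [Finset.coe_range, Set.mem_Iio]
  by_contra hc
  exact hx (hT x (by omega))

lemma sum_range_split (F : ℤ → ℤ) (lam : PartitionSeq) (S : ℤ) {T N : ℕ}
    (hT : ∀ y, T ≤ y → lam.part y = 0) (hTN : T ≤ N) :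
    ∑ x ∈ Finset.range N, F (bseq lam S x)
      = (∑ x ∈ Finset.range T, (F (bseq lam S x) - F (S - 1 - x)))
        + ∑ x ∈ Finset.range N, F (S - 1 - x) := by
  have h1 : ∀ M : ℕ, ∑ x ∈ Finset.range M, F (S-1-x)
      = ∑ x ∈ Finset.Ico 0 M, F (S-1-x) := by
    intro M; rw [Finset.range_eq_Ico]
  rw [Finset.sum_sub_distrib]
  have hsplit : ∀ G : ℕ → ℤ, ∑ x ∈ Finset.range N, G x
      = ∑ x ∈ Finset.range T, G x + ∑ x ∈ Finset.Ico T N, G x := by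
    intro G
    simp only [Finset.range_eq_Ico]
    exact (Finset.sum_Ico_consecutive _ (Nat.zero_le T) hTN).symm
  rw [hsplit (fun x => F (bseq lam S x)), hsplit (fun x => F (S-1-x))]
  have htail : ∑ x ∈ Finset.Ico T N, F (bseq lam S x)
      = ∑ x ∈ Finset.Ico T N, F (S-1-x) := by
    apply Finset.sum_congr rfl
    intro x hx
    rw [bseq_zero hT (Finset.mem_Ico.mp hx).1]
  rw [htail]; ring

lemma window_coe (lam : PartitionSeq) (S : ℤ) {T N : ℕ}
    (hT : ∀ y, T ≤ y → lam.part y = 0) (hTN : T ≤ N) :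
    ((Finset.range N).image (bseq lam S) : Set ℤ) = betaSet lam S ∩ Set.Ici (S - N) := by
  ext b
  simp only [Finset.coe_image, Finset.coe_range, Set.mem_image, Set.mem_Iio,
    Set.mem_inter_iff, Set.mem_Ici, betaSet_eq_range, Set.mem_range]
  constructor
  · rintro ⟨x, hx, rfl⟩
    refine ⟨⟨x, rfl⟩, ?_⟩
    have h1 : S - 1 - (x : ℤ) ≤ bseq lam S x := by
      unfold bseq; have := Int.ofNat_nonneg (lam.part x); omega
    have h2 : (x : ℤ) ≤ (N : ℤ) - 1 := by
      have : (x:ℤ) < (N:ℤ) := by exact_mod_cast hx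
      omega
    omega
  · rintro ⟨⟨x, rfl⟩, hge⟩
    refine ⟨x, ?_, rfl⟩
    by_contra hc
    rw [bseq_zero hT (by omega)] at hge
    have : (N : ℤ) ≤ (x : ℤ) := by exact_mod_cast Nat.cast_le.mpr (by omega : N ≤ x)
    omega
/-! ### Every abstract β-set is the β-set of a pair `(λ, s)` -/

noncomputable def topE (B : Set ℤ) : ℕ → ℤ
  | 0 => sSup B
  | n+1 => sSup (B ∩ Set.Iio (topE B n))

section topE

variable {B : Set ℤ} (hB : IsBetaSet B)
include hB

lemma topE_lower : ∀ t : ℤ, ∃ w : ℤ, w ∈ B ∧ w < t := by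
  intro t
  obtain ⟨⟨N, hN⟩, _⟩ := hB
  exact ⟨min N t - 1, hN _ (by omega), by omega⟩

lemma topE_bddAbove : BddAbove B := by
  obtain ⟨_, ⟨M, hM⟩⟩ := hB
  exact ⟨M, fun z hz => by by_contra hc; exact hM z (by omega) hz⟩

lemma topE_mem (n : ℕ) : topE B n ∈ B ∧ topE B (n+1) < topE B n ∧
    (∀ b ∈ B, b < topE B n → b ≤ topE B (n+1)) ∧ (∀ b ∈ B, b ≤ topE B 0) := by
  have hba := topE_bddAbove hB
  have hne : B.Nonempty := by obtain ⟨w, hw, _⟩ := topE_lower hB (0:ℤ); exact ⟨w, hw⟩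
  have h0 : topE B 0 ∈ B := Int.csSup_mem hne hba
  have hub0 : ∀ b ∈ B, b ≤ topE B 0 := fun b hb => le_csSup hba hb
  have key : ∀ m : ℕ, topE B m ∈ B → topE B (m+1) ∈ B ∧ topE B (m+1) < topE B m ∧
      (∀ b ∈ B, b < topE B m → b ≤ topE B (m+1)) := by
    intro m _
    have hne' : (B ∩ Set.Iio (topE B m)).Nonempty := by
      obtain ⟨w, hw1, hw2⟩ := topE_lower hB (topE B m); exact ⟨w, hw1, hw2⟩
    have hba' : BddAbove (B ∩ Set.Iio (topE B m)) :=
      hba.mono Set.inter_subset_left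
    have hmem : topE B (m+1) ∈ B ∩ Set.Iio (topE B m) := by
      show sSup _ ∈ _
      exact Int.csSup_mem hne' hba'
    exact ⟨hmem.1, hmem.2, fun b hb hlt => le_csSup hba' ⟨hb, hlt⟩⟩
  have hmem : ∀ m, topE B m ∈ B := by
    intro m; induction m with
    | zero => exact h0
    | succ m ih => exact (key m ih).1
  exact ⟨hmem n, (key n (hmem n)).2.1, (key n (hmem n)).2.2, hub0⟩

lemma topE_strictAnti : StrictAnti (topE B) := by
  apply strictAnti_nat_of_succ_lt
  intro n; exact (topE_mem hB n).2.1

lemma topE_surj {b : ℤ} (hb : b ∈ B) : ∃ n, topE B n = b := by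
  -- elements above topE (n+1) lie in the image of {0,...,n}
  have key : ∀ n : ℕ, ∀ b ∈ B, topE B (n+1) < b → ∃ m, m ≤ n ∧ topE B m = b := by
    intro n
    induction n with
    | zero =>
      intro b hb hlt
      refine ⟨0, le_refl 0, ?_⟩
      have h1 := (topE_mem hB 0).2.2.2 b hb
      rcases eq_or_lt_of_le h1 with h | h
      · exact h.symm
      · exact absurd ((topE_mem hB 0).2.2.1 b hb h) (by omega)
    | succ n ih =>
      intro b hb hlt
      rcases lt_trichotomy (topE B (n+1)) b with h | h | h
      · obtain ⟨m, hm, hmb⟩ := ih b hb h; exact ⟨m, by omega, hmb⟩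
      · exact ⟨n+1, le_refl _, h⟩
      · exact absurd ((topE_mem hB (n+1)).2.2.1 b hb h) (by omega)
  have hdesc : ∀ n : ℕ, topE B n ≤ topE B 0 - n := by
    intro n; induction n with
    | zero => simp
    | succ n ih =>
      have := (topE_mem hB n).2.1
      push_cast; omega
  have hb0 := (topE_mem hB 0).2.2.2 b hb
  set n := (topE B 0 - b).toNat + 1 with hn
  have h1 : topE B n < b := by
    have h2 := hdesc n
    have h3 : ((topE B 0 - b).toNat : ℤ) = topE B 0 - b := Int.toNat_of_nonneg (by omega)
    have : (n : ℤ) = (topE B 0 - b) + 1 := by rw [hn]; push_cast; omega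
    omega
  rcases Nat.exists_eq_add_of_le (Nat.one_le_iff_ne_zero.mpr (by omega) : 1 ≤ n) with ⟨m, hm⟩
  have : topE B (m+1) < b := by rw [hm, Nat.add_comm] at h1; exact h1
  obtain ⟨m', _, hm'⟩ := key m b hb this
  exact ⟨m', hm'⟩

lemma topE_range : Set.range (topE B) = B := by
  ext b
  constructor
  · rintro ⟨n, rfl⟩; exact (topE_mem hB n).1
  · intro hb; obtain ⟨n, hn⟩ := topE_surj hB hb; exact ⟨n, hn⟩

lemma topE_eventually : ∃ n0 : ℕ, ∀ n : ℕ, n0 ≤ n →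
    topE B n + n = topE B n0 + n0 := by
  obtain ⟨N, hN⟩ := hB.1
  have hdesc : ∀ n : ℕ, topE B n ≤ topE B 0 - n := by
    intro n; induction n with
    | zero => simp
    | succ n ih => have := (topE_mem hB n).2.1; push_cast; omega
  have hstep : ∀ n : ℕ, topE B n < N → topE B (n+1) = topE B n - 1 := by
    intro n hn
    have h1 : topE B n - 1 ∈ B := hN _ (by omega)
    have h2 := (topE_mem hB n).2.2.1 _ h1 (by omega)
    have h3 := (topE_mem hB n).2.1
    omega
  set n0 := (topE B 0 - N).toNat + 1 with hn0
  have h1 : topE B n0 < N := by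
    have h2 := hdesc n0
    have h3 : topE B 0 - N ≤ ((topE B 0 - N).toNat : ℤ) := Int.self_le_toNat _
    have : ((n0 : ℕ) : ℤ) = ((topE B 0 - N).toNat : ℤ) + 1 := by rw [hn0]; push_cast; ring
    omega
  refine ⟨n0, ?_⟩
  intro n hn
  induction n with
  | zero => omega
  | succ n ih =>
    rcases Nat.lt_or_ge n0 (n+1) with h | h
    · have hn' : n0 ≤ n := by omega
      have ihn := ih hn'
      have hlt : topE B n < N := by
        have : topE B n ≤ topE B n0 := (topE_strictAnti hB).antitone hn'
        rcases eq_or_lt_of_le this with hh | hh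
        · rw [hh]; exact h1
        · omega
      have := hstep n hlt
      push_cast; omega
    · have : n0 = n+1 := by omega
      rw [this]
  end topE

lemma isBetaSet_exists_rep {B : Set ℤ} (hB : IsBetaSet B) :
    ∃ p : PartitionSeq × ℤ, betaSet p.1 p.2 = B := by
  obtain ⟨n0, hn0⟩ := topE_eventually hB
  set S := topE B n0 + n0 + 1 with hS
  have hnonneg : ∀ n : ℕ, 0 ≤ topE B n + n + 1 - S := by
    intro n
    rcases Nat.lt_or_ge n n0 with h | h
    · have : topE B n0 + (n0 - n : ℕ) ≤ topE B n := by
        have hmono : ∀ d : ℕ, ∀ m : ℕ, topE B (m + d) + d ≤ topE B m := by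
          intro d
          induction d with
          | zero => simp
          | succ d ih =>
            intro m
            have h1 := ih (m+1)
            have h2 := (topE_mem hB m).2.1
            have h3 : m + 1 + d = m + (d+1) := by omega
            rw [h3] at h1
            push_cast at h1 ⊢
            omega
        have := hmono (n0 - n) n
        have hrw : n + (n0 - n) = n0 := by omega
        rw [hrw] at this
        omega
      have hcast : ((n0 - n : ℕ) : ℤ) = (n0 : ℤ) - n := by
        push_cast [Nat.cast_sub (by omega : n ≤ n0)]; ring
      omega
    · have := hn0 n h; omega
  refine ⟨⟨⟨fun n => (topE B n + n + 1 - S).toNat, ?_, ?_⟩, S⟩, ?_⟩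
  · intro i j hij
    apply Int.toNat_le_toNat
    have : topE B j + j ≤ topE B i + i := by
      have hmono : ∀ d m : ℕ, topE B (m + d) + (m + d : ℕ) ≤ topE B m + m := by
        intro d
        induction d with
        | zero => simp
        | succ d ih =>
          intro m
          have h1 := ih (m+1)
          have h2 := (topE_mem hB m).2.1
          have h3 : m + 1 + d = m + (d+1) := by omega
          rw [h3] at h1
          push_cast at h1 ⊢
          omega
      have := hmono (j - i) i
      have hrw : i + (j - i) = j := by omega
      rw [hrw] at this
      push_cast at this
      omega
    omega
  · exact ⟨n0, fun n hn => by
      have := hn0 n hn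
      omega⟩
  · show betaSet _ S = B
    rw [betaSet_eq_range]
    have hfun : ∀ (P : PartitionSeq), P.part = (fun n => (topE B n + n + 1 - S).toNat) →
        Set.range (bseq P S) = B := by
      intro P hP
      rw [← topE_range hB]
      have heq : bseq P S = topE B := by
        funext n
        show (P.part n : ℤ) - ((n:ℤ)+1) + S = topE B n
        rw [hP]
        simp only []
        rw [Int.toNat_of_nonneg (hnonneg n)]
        ring
      rw [heq]
    exact hfun _ rfl

lemma partOfBeta_spec {B : Set ℤ} (h : ∃ p : PartitionSeq × ℤ, betaSet p.1 p.2 = B) :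
    betaSet (partOfBeta B).1 (partOfBeta B).2 = B := by
  unfold partOfBeta
  rw [dif_pos h]
  exact h.choose_spec
/-! ### Counting residues -/

lemma int_ediv_eq (a b : ℤ) : Int.ediv a b = a / b := rfl
lemma int_emod_eq (a b : ℤ) : Int.emod a b = a % b := rfl

lemma ediv_succ {e : ℕ} (he : 0 < e) (m : ℤ) :
    m / (e:ℤ) = (m - 1) / (e:ℤ) + (if (e:ℤ) ∣ m then 1 else 0) := by
  have he' : (e : ℤ) ≠ 0 := by exact_mod_cast he.ne'
  have heZ : (1:ℤ) ≤ (e:ℤ) := by exact_mod_cast he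
  by_cases h : (e:ℤ) ∣ m
  · obtain ⟨q, rfl⟩ := h
    rw [if_pos ⟨q, rfl⟩]
    have e1 : (e:ℤ) * q / e = q := Int.mul_ediv_cancel_left q he'
    have e2 : ((e:ℤ) * q - 1) / e = q - 1 := by
      have hrw : (e:ℤ) * q - 1 = (e - 1) + (q - 1) * e := by ring
      rw [hrw, Int.add_mul_ediv_right _ _ he',
        Int.ediv_eq_zero_of_lt (by omega) (by omega), zero_add]
    rw [e1, e2]; ring
  · rw [if_neg h]
    obtain ⟨q, rr, hm, h1, h2⟩ : ∃ q rr : ℤ, m = rr + q * e ∧ 0 ≤ rr ∧ rr < e :=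
      ⟨m / e, m % e, by linear_combination - Int.emod_add_mul_ediv m e,
        Int.emod_nonneg m he', Int.emod_lt_of_pos m (by omega)⟩
    have h0 : rr ≠ 0 := fun hrr => h ⟨q, by rw [hm, hrr]; ring⟩
    subst hm
    have e1 : (rr + q * (e:ℤ)) / e = q := by
      rw [Int.add_mul_ediv_right _ _ he', Int.ediv_eq_zero_of_lt h1 h2, zero_add]
    have e2 : (rr + q * (e:ℤ) - 1) / e = q := by
      have hrw : rr + q * (e:ℤ) - 1 = (rr - 1) + q * e := by ring
      rw [hrw, Int.add_mul_ediv_right _ _ he',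
        Int.ediv_eq_zero_of_lt (by omega) (by omega), zero_add]
    rw [e1, e2]; ring

lemma count_dvd_range (e : ℕ) (he : 0 < e) (c : ℤ) (n : ℕ) :
    ((((Finset.range n).filter (fun y : ℕ => (e:ℤ) ∣ (c + (y:ℤ)))).card : ℤ))
      = (c + n - 1) / (e:ℤ) - (c - 1) / (e:ℤ) := by
  classical
  induction n with
  | zero => simp
  | succ n ih =>
    rw [Finset.range_add_one, Finset.filter_insert]
    have hkey := ediv_succ he (c + n)
    have harg2 : c + (n:ℤ) - 1 = c + n - 1 := by push_cast; ring
    by_cases h : (e:ℤ) ∣ (c + n)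
    · rw [if_pos h, Finset.card_insert_of_notMem (by simp)]
      rw [if_pos h] at hkey
      push_cast
      push_cast at ih hkey
      have harg : c + ((n:ℤ) + 1) - 1 = c + n := by ring
      rw [harg]
      omega
    · rw [if_neg h]
      rw [if_neg h] at hkey
      push_cast
      push_cast at ih hkey
      have harg : c + ((n:ℤ) + 1) - 1 = c + n := by ring
      rw [harg]
      omega

/-- The fundamental identity: the number of `j`-residue nodes of `λ` (with
charge `s`) computed from the β-numbers. -/
lemma lemA (e : ℕ) (he : 0 < e) (lam : PartitionSeq) (s : ℤ) (j : ZMod e) (J' : ℤ)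
    (hJ : (J' : ZMod e) = j) {T : ℕ} (hT : ∀ x, T ≤ x → lam.part x = 0) :
    (({p : ℕ × ℕ | p.2 < lam.part p.1 ∧
        ((s : ZMod e) + (p.2 : ZMod e) - (p.1 : ZMod e) = j)}).ncard : ℤ)
    = ∑ x ∈ Finset.range T,
        ((bseq lam s x - J') / (e:ℤ) - (s - 1 - x - J') / (e:ℤ)) := by
  classical
  have hcond : ∀ (x y : ℕ), (((s : ZMod e) + (y : ZMod e) - (x : ZMod e) = j)
      ↔ (e:ℤ) ∣ (s + y - x - J')) := by
    intro x y
    rw [← hJ]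
    rw [← ZMod.intCast_zmod_eq_zero_iff_dvd]
    push_cast
    constructor
    · intro hh; linear_combination hh
    · intro hh; linear_combination hh
  set L := lam.part 0 with hL
  set FF := (Finset.range T ×ˢ Finset.range L).filter
      (fun p : ℕ × ℕ => p.2 < lam.part p.1 ∧ (e:ℤ) ∣ (s + p.2 - p.1 - J')) with hFF
  have hset : {p : ℕ × ℕ | p.2 < lam.part p.1 ∧
      ((s : ZMod e) + (p.2 : ZMod e) - (p.1 : ZMod e) = j)} = ↑FF := by
    ext ⟨x, y⟩
    simp only [hFF, Set.mem_setOf_eq, Finset.coe_filter, Finset.mem_product,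
      Finset.mem_range, Set.mem_setOf_eq]
    constructor
    · rintro ⟨h1, h2⟩
      refine ⟨⟨?_, ?_⟩, h1, (hcond x y).mp h2⟩
      · by_contra hc
        rw [hT x (by omega)] at h1; omega
      · exact lt_of_lt_of_le h1 (lam.antitone 0 x (Nat.zero_le x))
    · rintro ⟨_, h1, h2⟩
      exact ⟨h1, (hcond x y).mpr h2⟩
  rw [hset, Set.ncard_coe_finset]
  rw [hFF, Finset.card_filter, Finset.sum_product]
  rw [Nat.cast_sum]
  apply Finset.sum_congr rfl
  intro x _
  have hinner : (∑ y ∈ Finset.range L,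
      if y < lam.part x ∧ (e:ℤ) ∣ (s + y - x - J') then (1:ℕ) else 0)
      = ((Finset.range (lam.part x)).filter
          (fun y : ℕ => (e:ℤ) ∣ ((s - (x:ℤ) - J') + (y:ℤ)))).card := by
    rw [Finset.card_filter]
    rw [← Finset.sum_filter_add_sum_filter_not (Finset.range L)
      (fun y => y < lam.part x)]
    have hz : (∑ y ∈ (Finset.range L).filter (fun y => ¬ y < lam.part x),
        if y < lam.part x ∧ (e:ℤ) ∣ (s + y - x - J') then (1:ℕ) else 0) = 0 := by
      apply Finset.sum_eq_zero
      intro y hy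
      simp only [Finset.mem_filter] at hy
      rw [if_neg (by tauto)]
    rw [hz, add_zero]
    have hfeq : (Finset.range L).filter (fun y => y < lam.part x)
        = Finset.range (lam.part x) := by
      ext y
      simp only [Finset.mem_filter, Finset.mem_range]
      have : lam.part x ≤ L := lam.antitone 0 x (Nat.zero_le x)
      omega
    rw [hfeq]
    apply Finset.sum_congr rfl
    intro y hy
    simp only [Finset.mem_range] at hy
    have harg : s + (y:ℤ) - x - J' = (s - x - J') + y := by ring
    rw [harg]
    simp [hy]
  rw [hinner]
  rw [count_dvd_range e he (s - x - J') (lam.part x)]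
  unfold bseq
  congr 2
  · push_cast; ring
  · ring

lemma psize_eq_cfun {lam : PartitionSeq} {s : ℤ} {T : ℕ}
    (hT : ∀ x, T ≤ x → lam.part x = 0) :
    ((psize lam : ℤ))
      = ∑ x ∈ Finset.range T, (bseq lam s x - (s - 1 - x)) := by
  rw [psize_eq_sum hT, Nat.cast_sum]
  apply Finset.sum_congr rfl
  intro x _
  unfold bseq
  ring
/-! ### Arithmetic of Uglov's map ψ -/

section psiLemmas

variable {e r : ℕ}

lemma psi_decomp (he : 0 < e) (K b : ℤ) :
    ∃ q i : ℤ, b = i + q * e ∧ 0 ≤ i ∧ i < e ∧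
      psi e r K b = i + ((q+1)*(r:ℤ) - K)*e ∧ b / (e:ℤ) = q ∧ b % (e:ℤ) = i := by
  have he' : (e : ℤ) ≠ 0 := by exact_mod_cast he.ne'
  refine ⟨b / e, b % e, by linear_combination - Int.emod_add_mul_ediv b e,
    Int.emod_nonneg b he', Int.emod_lt_of_pos b (by exact_mod_cast he), ?_, rfl, rfl⟩
  show ((Int.ediv b e + 1) * r - K) * e + Int.emod b e = _
  rw [int_ediv_eq, int_emod_eq]
  ring

lemma ediv_shift {a q : ℤ} (he : 0 < e) : (a + q * (e:ℤ)) / e = a / e + q :=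
  Int.add_mul_ediv_right a q (by exact_mod_cast he.ne')

lemma psi_ediv_formula (he : 0 < e) {J' K b : ℤ} :
    (psi e r K b - J') / (e:ℤ)
      = (r:ℤ) * ((b - J') / e) + ((r:ℤ) - K) + ((r:ℤ) - 1) * (b / (e:ℤ) - (b - J')/e) := by
  obtain ⟨q, i, hb, h0, h1, hpsi, hq, hi⟩ := psi_decomp (r := r) he K b
  have hL : (psi e r K b - J') / (e:ℤ) = (i - J') / (e:ℤ) + ((q+1)*(r:ℤ) - K) := by
    rw [hpsi, show i + ((q+1)*(r:ℤ) - K)*e - J' = (i - J') + ((q+1)*(r:ℤ) - K) * e by ring,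
      ediv_shift he]
  have hR1 : (b - J') / (e:ℤ) = (i - J') / (e:ℤ) + q := by
    rw [hb, show i + q * (e:ℤ) - J' = (i - J') + q * e by ring, ediv_shift he]
  rw [hL, hR1, hq]
  ring

lemma psi_id_formula (he : 0 < e) {K b : ℤ} :
    psi e r K b = b + ((r:ℤ) - K)*e + ((r:ℤ) - 1)*e*(b / (e:ℤ)) := by
  obtain ⟨q, i, hb, h0, h1, hpsi, hq, hi⟩ := psi_decomp (r := r) he K b
  rw [hpsi, hq]
  rw [hb]  -- b occurrences
  ring

lemma psi_runner (he : 0 < e) (hr : 0 < r) {K b : ℤ} (hK1 : 1 ≤ K) (hK2 : K ≤ r) :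
    (psi e r K b / (e:ℤ)) % (r:ℤ) = (r:ℤ) - K := by
  obtain ⟨q, i, hb, h0, h1, hpsi, hq, hi⟩ := psi_decomp (r := r) he K b
  have h2 : psi e r K b / (e:ℤ) = ((r:ℤ) - K) + q * r := by
    rw [hpsi, ediv_shift he, Int.ediv_eq_zero_of_lt h0 h1]
    ring
  rw [h2, Int.add_mul_emod_self_right]
  exact Int.emod_eq_of_lt (by omega) (by omega)

lemma psi_emod (he : 0 < e) {K b : ℤ} : psi e r K b % (e:ℤ) = b % e := by
  obtain ⟨q, i, hb, h0, h1, hpsi, hq, hi⟩ := psi_decomp (r := r) he K b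
  rw [hpsi, Int.add_mul_emod_self_right, hi, Int.emod_eq_of_lt h0 h1]

lemma psi_inj (he : 0 < e) (hr : 0 < r) (K : ℤ) :
    Function.Injective (psi (e:ℤ) (r:ℤ) K) := by
  intro b b' hbb
  obtain ⟨q, i, hb, h0, h1, hpsi, hq, hi⟩ := psi_decomp (r := r) he K b
  obtain ⟨q', i', hb', h0', h1', hpsi', hq', hi'⟩ := psi_decomp (r := r) he K b'
  have hii : i = i' := by
    have := congrArg (fun z => z % (e:ℤ)) hbb
    simpa [psi_emod he, hi, hi', Int.emod_eq_of_lt h0 h1,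
      Int.emod_eq_of_lt h0' h1'] using this
  have hqq : q = q' := by
    rw [hpsi, hpsi', hii] at hbb
    have h2 : ((q+1)*(r:ℤ) - K) * e = ((q'+1)*(r:ℤ) - K) * e := by omega
    have he' : (e : ℤ) ≠ 0 := by exact_mod_cast he.ne'
    have h3 : (q+1)*(r:ℤ) - K = (q'+1)*(r:ℤ) - K := mul_right_cancel₀ he' h2
    have h4 : (q+1)*(r:ℤ) = (q'+1)*(r:ℤ) := by omega
    have hr' : (r : ℤ) ≠ 0 := by exact_mod_cast hr.ne'
    have := mul_right_cancel₀ hr' h4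
    omega
  rw [hb, hb', hii, hqq]

lemma psi_Ici (he : 0 < e) (hr : 0 < r) {K b m0 : ℤ} (hK1 : 1 ≤ K) (hK2 : K ≤ r) :
    (e:ℤ) * m0 ≤ b ↔ (r:ℤ) * e * m0 ≤ psi e r K b := by
  obtain ⟨q, i, hb, h0, h1, hpsi, hq, hi⟩ := psi_decomp (r := r) he K b
  have heZ : (1:ℤ) ≤ (e:ℤ) := by exact_mod_cast he
  have hrZ : (1:ℤ) ≤ (r:ℤ) := by exact_mod_cast hr
  constructor
  · intro hmb
    have hb1 : b < (q+1) * (e:ℤ) := by rw [hb]; nlinarith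
    have hm1 : (e:ℤ) * m0 < e * (q+1) := by nlinarith
    have hqm : m0 ≤ q := by
      have := lt_of_mul_lt_mul_left hm1 (by positivity : (0:ℤ) ≤ e)
      omega
    rw [hpsi]
    have key : (r:ℤ) * m0 ≤ (q+1)*(r:ℤ) - K := by nlinarith
    have h5 : ((r:ℤ) * m0) * e ≤ ((q+1)*(r:ℤ) - K) * e :=
      mul_le_mul_of_nonneg_right key (by omega)
    nlinarith
  · intro hmb
    rw [hpsi] at hmb
    have key : (r:ℤ) * m0 ≤ (q+1)*(r:ℤ) - K := by
      by_contra hc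
      push_neg at hc
      have h2 : (q+1)*(r:ℤ) - K ≤ (r:ℤ) * m0 - 1 := by omega
      have h3 : ((q+1)*(r:ℤ) - K) * e ≤ ((r:ℤ) * m0 - 1) * e :=
        mul_le_mul_of_nonneg_right h2 (by omega)
      nlinarith
    have hm1 : (r:ℤ) * m0 < r * (q+1) := by nlinarith
    have hqm : m0 ≤ q := by
      have := lt_of_mul_lt_mul_left hm1 (by positivity : (0:ℤ) ≤ r)
      omega
    rw [hb]
    nlinarith

lemma psi_upper (he : 0 < e) {K b M : ℤ} (hK1 : 1 ≤ K) (hb : b ≤ M) :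
    psi e r K b ≤ (M / (e:ℤ) + 1) * (r:ℤ) * e + e := by
  obtain ⟨q, i, hbd, h0, h1, hpsi, hq, hi⟩ := psi_decomp (r := r) he K b
  have hqM : q ≤ M / (e:ℤ) := by rw [← hq]; exact Int.ediv_le_ediv (by exact_mod_cast he) hb
  rw [hpsi]
  have hr0 : (0:ℤ) ≤ (r:ℤ) := by positivity
  have h2 : ((q+1)*(r:ℤ) - K) * e ≤ ((M / (e:ℤ) + 1) * (r:ℤ)) * e := by
    apply mul_le_mul_of_nonneg_right _ (by omega)
    have : (q+1) * (r:ℤ) ≤ (M / (e:ℤ) + 1) * r := mul_le_mul_of_nonneg_right (by omega) hr0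
    omega
  omega

end psiLemmas
/-! ### The Uglov configuration is a β-set -/

lemma mem_uglovSet {e r : ℕ} {B : Fin r → Set ℤ} {z : ℤ} :
    z ∈ uglovSet e r B ↔ ∃ k : Fin r, ∃ b ∈ B k, psi e r ((k:ℕ)+1) b = z := by
  simp only [uglovSet, Set.mem_iUnion, Set.mem_image]

lemma uglov_isBetaSet {e r : ℕ} (he : 0 < e) (hr : 0 < r)
    (lam : Fin r → PartitionSeq) (s : Fin r → ℤ) :
    IsBetaSet (uglovSet e r fun k => betaSet (lam k) (s k)) := by
  have hne : (Finset.univ : Finset (Fin r)).Nonempty := ⟨⟨0, hr⟩, Finset.mem_univ _⟩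
  have heZ : (1:ℤ) ≤ (e:ℤ) := by exact_mod_cast he
  have hrZ : (1:ℤ) ≤ (r:ℤ) := by exact_mod_cast hr
  constructor
  · -- lower bound
    choose T hT using fun k => (lam k).eventually_zero
    set c := Finset.univ.inf' hne (fun k => s k - T k) with hc
    have hlow : ∀ (k : Fin r) (w : ℤ), w < c → w ∈ betaSet (lam k) (s k) := by
      intro k w hw
      apply mem_betaSet_of_lt (hT k)
      exact lt_of_lt_of_le hw (Finset.inf'_le _ (Finset.mem_univ k))
    refine ⟨(e:ℤ) * r * (c / (e:ℤ)), ?_⟩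
    intro z hz
    set Q := z / (e:ℤ) with hQ
    set i := z % (e:ℤ) with hi
    set m := Q / (r:ℤ) with hm
    set ρ := Q % (r:ℤ) with hρ
    have hzdec : z = i + Q * e := by linear_combination - Int.emod_add_mul_ediv z e
    have hQdec : Q = ρ + m * r := by linear_combination - Int.emod_add_mul_ediv Q r
    have hi0 : 0 ≤ i := Int.emod_nonneg z (by omega)
    have hi1 : i < e := Int.emod_lt_of_pos z (by omega)
    have hρ0 : 0 ≤ ρ := Int.emod_nonneg Q (by omega)
    have hρ1 : ρ < r := Int.emod_lt_of_pos Q (by omega)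
    have hkbound : ρ.toNat ≤ r - 1 := by omega
    refine mem_uglovSet.mpr ⟨⟨r - 1 - ρ.toNat, by omega⟩, i + m * e, ?_, ?_⟩
    · apply hlow
      -- i + m*e < c
      have hem : (e:ℤ) * (r:ℤ) * m ≤ z := by
        rw [hzdec, hQdec]
        nlinarith
      have hmc : m < c / (e:ℤ) := by
        by_contra hcon
        push_neg at hcon
        have : (e:ℤ) * r * (c / (e:ℤ)) ≤ e * r * m := by
          apply mul_le_mul_of_nonneg_left hcon (by positivity)
        omega
      have hce : (c / (e:ℤ)) * e ≤ c := Int.ediv_mul_le c (by omega)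
      have : m * (e:ℤ) ≤ (c / (e:ℤ) - 1) * e := mul_le_mul_of_nonneg_right (by omega) (by omega)
      nlinarith
    · -- psi value is z
      have hK : (((⟨r - 1 - ρ.toNat, by omega⟩ : Fin r) : ℕ) : ℤ) + 1 = (r:ℤ) - ρ := by
        show (((r - 1 - ρ.toNat : ℕ) : ℤ)) + 1 = (r:ℤ) - ρ
        have h2 : ((ρ.toNat : ℤ)) = ρ := Int.toNat_of_nonneg hρ0
        push_cast [Nat.cast_sub (by omega : ρ.toNat ≤ r - 1), Nat.cast_sub (by omega : 1 ≤ r)]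
        omega
      rw [hK]
      show ((Int.ediv (i + m * e) e + 1) * r - ((r:ℤ) - ρ)) * e + Int.emod (i + m * e) e = z
      rw [int_ediv_eq, int_emod_eq]
      rw [show i + m * (e:ℤ) = i + m * e from rfl, ediv_shift he,
        Int.ediv_eq_zero_of_lt hi0 hi1, Int.add_mul_emod_self_right,
        Int.emod_eq_of_lt hi0 hi1]
      rw [hzdec, hQdec]
      ring
  · -- upper bound
    set M := Finset.univ.sup' hne (fun k => bseq (lam k) (s k) 0) with hM
    refine ⟨(M / (e:ℤ) + 1) * (r:ℤ) * e + e, ?_⟩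
    intro z hz hmem
    obtain ⟨k, b, hb, hpsi⟩ := mem_uglovSet.mp hmem
    have hbM : b ≤ M := by
      rw [betaSet_eq_range] at hb
      obtain ⟨x, rfl⟩ := hb
      calc bseq (lam k) (s k) x ≤ bseq (lam k) (s k) 0 :=
            (bseq_strictAnti _ _).antitone (Nat.zero_le x)
        _ ≤ M := by
            rw [hM]
            exact Finset.le_sup' (fun k => bseq (lam k) (s k) 0) (Finset.mem_univ k)
    have := psi_upper (r := r) he (K := ((k:ℕ):ℤ)+1) (by omega) hbM
    omega
/-! ### The main per-multipartition computation -/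

lemma perSide (e r : ℕ) (he : 2 ≤ e) (hr : 1 ≤ r)
    (lam : Fin r → PartitionSeq) (s : Fin r → ℤ)
    (T : Fin r → ℕ) (hT : ∀ k : Fin r, ∀ x, T k ≤ x → (lam k).part x = 0)
    (TU : ℕ)
    (hTU : ∀ x, TU ≤ x →
      ((partOfBeta (uglovSet e r fun k => betaSet (lam k) (s k))).1).part x = 0)
    (m0 : ℤ)
    (hm0k : ∀ k : Fin r, (e:ℤ) * m0 ≤ s k - T k)
    (hm0U : (r:ℤ) * e * m0 ≤
      (partOfBeta (uglovSet e r fun k => betaSet (lam k) (s k))).2 - TU) :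
    (partOfBeta (uglovSet e r fun k => betaSet (lam k) (s k))).2 = ∑ k, s k
    ∧ (∀ J' : ℕ, J' < e →
      ((resCount e (partOfBeta (uglovSet e r fun k => betaSet (lam k) (s k))).1
          ((J' : ZMod e) - (((∑ k, s k : ℤ)) : ZMod e))) : ℤ)
        = (r:ℤ) * (∑ k : Fin r, ∑ x ∈ Finset.range ((s k - e*m0).toNat),
              ((bseq (lam k) (s k) x - (J':ℤ)) / (e:ℤ)))
          + ((r:ℤ) - 1) * ((∑ k : Fin r, ∑ x ∈ Finset.range ((s k - e*m0).toNat),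
              ((bseq (lam k) (s k) x) / (e:ℤ)))
              - (∑ k : Fin r, ∑ x ∈ Finset.range ((s k - e*m0).toNat),
              ((bseq (lam k) (s k) x - (J':ℤ)) / (e:ℤ))))
          + (∑ k : Fin r, ((r:ℤ) - ((k:ℕ)+1)) * (s k - e*m0))
          - ∑ x ∈ Finset.range (((∑ k, s k) - r*e*m0).toNat),
              (((∑ k, s k) - 1 - x - (J':ℤ)) / (e:ℤ)))
    ∧ ((psize (partOfBeta (uglovSet e r fun k => betaSet (lam k) (s k))).1 : ℤ)
        = (∑ k : Fin r, ∑ x ∈ Finset.range ((s k - e*m0).toNat),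
            bseq (lam k) (s k) x)
          + (∑ k : Fin r, ((r:ℤ) - ((k:ℕ)+1)) * (e:ℤ) * (s k - e*m0))
          + ((r:ℤ) - 1) * (e:ℤ) * (∑ k : Fin r, ∑ x ∈ Finset.range ((s k - e*m0).toNat),
              ((bseq (lam k) (s k) x) / (e:ℤ)))
          - ∑ x ∈ Finset.range (((∑ k, s k) - r*e*m0).toNat),
              ((∑ k, s k) - 1 - (x:ℤ))) := by
  classical
  have he1 : 0 < e := by omega
  have hr1 : 0 < r := by omega
  set B : Fin r → Set ℤ := fun k => betaSet (lam k) (s k) with hB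
  set U := uglovSet e r B with hU
  have hBU : IsBetaSet U := uglov_isBetaSet he1 hr1 lam s
  have hrep := partOfBeta_spec (isBetaSet_exists_rep hBU)
  set Λ := (partOfBeta U).1 with hΛ
  set S := (partOfBeta U).2 with hS0
  -- component windows
  set N : Fin r → ℕ := fun k => (s k - e*m0).toNat with hN
  have hNk : ∀ k, ((N k : ℤ)) = s k - (e:ℤ)*m0 := by
    intro k
    apply Int.toNat_of_nonneg
    have h1 := hm0k k
    have h2 : (0:ℤ) ≤ (T k : ℤ) := by positivity
    omega
  have hTN : ∀ k, T k ≤ N k := by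
    intro k
    have h1 := hm0k k
    have h2 := hNk k
    omega
  set W : Fin r → Finset ℤ := fun k => (Finset.range (N k)).image (bseq (lam k) (s k)) with hW
  have hWcoe : ∀ k, ((W k : Set ℤ)) = betaSet (lam k) (s k) ∩ Set.Ici ((e:ℤ)*m0) := by
    intro k
    rw [hW]
    have h1 := window_coe (lam k) (s k) (hT k) (hTN k)
    rw [h1, hNk k]
    congr 1
    congr 1
    ring
  -- the assembled window
  set UF : Finset ℤ :=
    Finset.univ.biUnion (fun k : Fin r => (W k).image (psi e r ((k:ℕ)+1))) with hUF
  have hUFcoe : ((UF : Set ℤ)) = U ∩ Set.Ici ((r:ℤ)*e*m0) := by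
    ext z
    rw [Finset.mem_coe]
    constructor
    · intro hz
      rw [hUF, Finset.mem_biUnion] at hz
      obtain ⟨k, -, hzk⟩ := hz
      rw [Finset.mem_image] at hzk
      obtain ⟨b, hbW, rfl⟩ := hzk
      have hbW' : b ∈ (W k : Set ℤ) := hbW
      rw [hWcoe k] at hbW'
      obtain ⟨hb1, hb2⟩ := hbW'
      constructor
      · rw [hU]; exact mem_uglovSet.mpr ⟨k, b, hb1, rfl⟩
      · exact (psi_Ici he1 hr1 (by omega) (by
          have : (k:ℕ) < r := k.isLt
          omega)).mp hb2
    · rintro ⟨hz1, hz2⟩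
      rw [hU] at hz1
      obtain ⟨k, b, hb, rfl⟩ := mem_uglovSet.mp hz1
      rw [Set.mem_Ici] at hz2
      have hbge : (e:ℤ)*m0 ≤ b := (psi_Ici he1 hr1 (by omega) (by
          have : (k:ℕ) < r := k.isLt
          omega)).mpr hz2
      have hbW : b ∈ W k := by
        rw [← Finset.mem_coe, hWcoe k]
        exact ⟨hb, hbge⟩
      rw [hUF, Finset.mem_biUnion]
      exact ⟨k, Finset.mem_univ k, Finset.mem_image_of_mem _ hbW⟩
  -- the big window
  set NU : ℕ := (S - (r:ℤ)*e*m0).toNat with hNU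
  have hTUz : (0:ℤ) ≤ (TU:ℤ) := by positivity
  have hNUeq : ((NU : ℤ)) = S - (r:ℤ)*e*m0 := by
    apply Int.toNat_of_nonneg
    omega
  have hTUNU : TU ≤ NU := by omega
  set WU : Finset ℤ := (Finset.range NU).image (bseq Λ S) with hWU
  have hWUcoe : ((WU : Set ℤ)) = U ∩ Set.Ici ((r:ℤ)*e*m0) := by
    rw [hWU]
    have h1 := window_coe Λ S hTU hTUNU
    rw [h1, hrep]
    congr 1
    congr 1
    rw [hNUeq]
    ring
  have hWUF : WU = UF := Finset.coe_injective (hWUcoe.trans hUFcoe.symm)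
  -- disjointness of the pieces
  have hdisj : ((Finset.univ : Finset (Fin r)) : Set (Fin r)).PairwiseDisjoint
      (fun k : Fin r => (W k).image (psi e r ((k:ℕ)+1))) := by
    intro k _ k' _ hkk'
    simp only [Function.onFun]
    rw [Finset.disjoint_left]
    rintro u hu hu'
    simp only [Finset.mem_image] at hu hu'
    obtain ⟨b, _, rfl⟩ := hu
    obtain ⟨b', _, hbb⟩ := hu'
    have h1 := psi_runner (r := r) he1 hr1 (K := ((k:ℕ):ℤ)+1) (by omega)
      (by have : (k:ℕ) < r := k.isLt; omega) (b := b)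
    have h2 := psi_runner (r := r) he1 hr1 (K := ((k':ℕ):ℤ)+1) (by omega)
      (by have : (k':ℕ) < r := k'.isLt; omega) (b := b')
    rw [hbb] at h2
    rw [h1] at h2
    have : ((k:ℕ):ℤ) = ((k':ℕ):ℤ) := by omega
    exact hkk' (Fin.ext (by exact_mod_cast this))
  -- cardinalities
  have hbinj : ∀ k : Fin r, Function.Injective (bseq (lam k) (s k)) :=
    fun k => (bseq_strictAnti (lam k) (s k)).injective
  have hcardW : ∀ k, (W k).card = N k := by
    intro k
    rw [hW, Finset.card_image_of_injective _ (hbinj k), Finset.card_range]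
  have hcardUF : UF.card = ∑ k, N k := by
    rw [hUF, Finset.card_biUnion (fun x _ y _ hxy => hdisj (Finset.mem_univ x)
      (Finset.mem_univ y) hxy)]
    apply Finset.sum_congr rfl
    intro k _
    rw [Finset.card_image_of_injective _ (psi_inj he1 hr1 _), hcardW]
  have hcardWU : WU.card = NU := by
    rw [hWU, Finset.card_image_of_injective _ (bseq_strictAnti Λ S).injective,
      Finset.card_range]
  have hNUsum : NU = ∑ k, N k := by rw [← hcardWU, hWUF, hcardUF]
  -- the charge identity
  have hsum_const : ∑ _k : Fin r, (e:ℤ)*m0 = (r:ℤ)*((e:ℤ)*m0) := by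
    rw [Finset.sum_const, Finset.card_univ, Fintype.card_fin, nsmul_eq_mul]
  have hSeq : S = ∑ k, s k := by
    have h1 : ((NU:ℤ)) = ∑ k, ((N k : ℤ)) := by exact_mod_cast congrArg (Nat.cast (R := ℤ)) hNUsum
    rw [hNUeq] at h1
    have h2 : ∑ k, ((N k : ℤ)) = (∑ k, s k) - (r:ℤ)*((e:ℤ)*m0) := by
      rw [Finset.sum_congr rfl (fun k _ => hNk k), Finset.sum_sub_distrib, hsum_const]
    rw [h2] at h1
    linear_combination h1
  -- transport of window sums
  have hsum : ∀ F : ℤ → ℤ, ∑ b ∈ WU, F b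
      = ∑ k : Fin r, ∑ x ∈ Finset.range (N k),
          F (psi e r ((k:ℕ)+1) (bseq (lam k) (s k) x)) := by
    intro F
    rw [hWUF, hUF, Finset.sum_biUnion hdisj]
    apply Finset.sum_congr rfl
    intro k _
    rw [Finset.sum_image (fun x _ y _ hxy => psi_inj he1 hr1 _ hxy), hW,
      Finset.sum_image (fun x _ y _ hxy => hbinj k hxy)]
  have himgWU : ∀ F : ℤ → ℤ, ∑ b ∈ WU, F b = ∑ x ∈ Finset.range NU, F (bseq Λ S x) := by
    intro F
    rw [hWU, Finset.sum_image (fun x _ y _ hxy => (bseq_strictAnti Λ S).injective hxy)]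
  refine ⟨hSeq, ?_, ?_⟩
  · -- residue counts
    intro J' hJ'
    rw [← hSeq]
    set F : ℤ → ℤ := fun b => (b - (J':ℤ)) / (e:ℤ) with hF
    -- step 1 : resCount = truncated alternating sum (lemA)
    have hreseq : (resCount e Λ ((J' : ZMod e) - ((S:ℤ) : ZMod e)) : ℤ)
        = ∑ x ∈ Finset.range TU, (F (bseq Λ S x) - F (S - 1 - x)) := by
      have hsetEq : {p : ℕ × ℕ | p.2 < Λ.part p.1 ∧
            ((p.2 : ZMod e) - (p.1 : ZMod e) = (J' : ZMod e) - ((S:ℤ) : ZMod e))}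
          = {p : ℕ × ℕ | p.2 < Λ.part p.1 ∧
            (((S:ℤ) : ZMod e) + (p.2 : ZMod e) - (p.1 : ZMod e) = ((J':ℤ) : ZMod e))} := by
        ext ⟨x, y⟩
        simp only [Set.mem_setOf_eq]
        constructor
        · rintro ⟨h1, h2⟩; refine ⟨h1, ?_⟩; push_cast; linear_combination h2
        · rintro ⟨h1, h2⟩; refine ⟨h1, ?_⟩; push_cast at h2 ⊢; linear_combination h2
      show ((Set.ncard _ : ℕ) : ℤ) = _
      rw [hsetEq]
      exact lemA e he1 Λ S ((J':ℤ) : ZMod e) (J':ℤ) rfl hTU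
    rw [hreseq]
    -- step 2 : extend to the full window
    have hwin := sum_range_split F Λ S hTU hTUNU
    have hstep2 : ∑ x ∈ Finset.range TU, (F (bseq Λ S x) - F (S - 1 - x))
        = (∑ b ∈ WU, F b) - ∑ x ∈ Finset.range NU, F (S - 1 - x) := by
      rw [himgWU F, hwin]; ring
    rw [hstep2]
    -- step 3 : decompose over components
    have hstep3 : ∑ b ∈ WU, F b
        = (r:ℤ) * (∑ k : Fin r, ∑ x ∈ Finset.range (N k), F (bseq (lam k) (s k) x))
          + ((r:ℤ) - 1) * ((∑ k : Fin r, ∑ x ∈ Finset.range (N k),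
              ((bseq (lam k) (s k) x) / (e:ℤ)))
            - (∑ k : Fin r, ∑ x ∈ Finset.range (N k), F (bseq (lam k) (s k) x)))
          + ∑ k : Fin r, ((r:ℤ) - ((k:ℕ)+1)) * (N k : ℤ) := by
      rw [hsum F]
      have hperk : ∀ k : Fin r, ∑ x ∈ Finset.range (N k),
          F (psi e r ((k:ℕ)+1) (bseq (lam k) (s k) x))
          = (r:ℤ) * (∑ x ∈ Finset.range (N k), F (bseq (lam k) (s k) x))
            + ((r:ℤ) - 1) * ((∑ x ∈ Finset.range (N k), ((bseq (lam k) (s k) x) / (e:ℤ)))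
              - (∑ x ∈ Finset.range (N k), F (bseq (lam k) (s k) x)))
            + ((r:ℤ) - ((k:ℕ)+1)) * (N k : ℤ) := by
        intro k
        have hpt : ∀ x ∈ Finset.range (N k),
            F (psi e r ((k:ℕ)+1) (bseq (lam k) (s k) x))
            = (r:ℤ) * F (bseq (lam k) (s k) x)
              + ((r:ℤ) - (((k:ℕ):ℤ)+1))
              + ((r:ℤ) - 1) * ((bseq (lam k) (s k) x) / (e:ℤ) - F (bseq (lam k) (s k) x)) := by
          intro x _
          exact psi_ediv_formula he1
        rw [Finset.sum_congr rfl hpt]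
        simp only [Finset.sum_add_distrib, Finset.sum_sub_distrib, ← Finset.mul_sum,
          Finset.sum_const, Finset.card_range, nsmul_eq_mul]
        try push_cast
        try ring
      rw [Finset.sum_congr rfl (fun k _ => hperk k)]
      simp only [Finset.sum_add_distrib, Finset.sum_sub_distrib, ← Finset.mul_sum]
      try push_cast
      try ring
    rw [hstep3]
    -- step 4 : replace N k by its value and finish
    have hNrw : ∀ k : Fin r, Finset.range (N k) = Finset.range ((s k - (e:ℤ)*m0).toNat) := by
      intro k; rw [hN]
    have hNUrw : Finset.range NU = Finset.range ((S - (r:ℤ)*e*m0).toNat) := by rw [hNU]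
    rw [hNUrw]
    have hNval : ∑ k : Fin r, ((r:ℤ) - ((k:ℕ)+1)) * (N k : ℤ)
        = ∑ k : Fin r, ((r:ℤ) - ((k:ℕ)+1)) * (s k - (e:ℤ)*m0) := by
      apply Finset.sum_congr rfl
      intro k _
      rw [hNk k]
    rw [hNval]
  · -- sizes
    rw [← hSeq]
    have hpsize : ((psize Λ : ℤ))
        = ∑ x ∈ Finset.range TU, (bseq Λ S x - (S - 1 - x)) := psize_eq_cfun hTU
    have hwin := sum_range_split (fun b => b) Λ S hTU hTUNU
    have himg' : (∑ b ∈ WU, b) = ∑ x ∈ Finset.range NU, bseq Λ S x := by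
      have h9 := himgWU id
      simpa only [id_eq] using h9
    have hstep2 : ((psize Λ : ℤ))
        = (∑ b ∈ WU, b) - ∑ x ∈ Finset.range NU, (S - 1 - x) := by
      rw [hpsize, himg', hwin]
      ring
    rw [hstep2]
    have hstep3 : (∑ b ∈ WU, b)
        = (∑ k : Fin r, ∑ x ∈ Finset.range (N k), bseq (lam k) (s k) x)
          + ∑ k : Fin r, ((r:ℤ) - ((k:ℕ)+1)) * (e:ℤ) * (N k : ℤ)
          + ((r:ℤ) - 1) * (e:ℤ) * (∑ k : Fin r, ∑ x ∈ Finset.range (N k),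
              ((bseq (lam k) (s k) x) / (e:ℤ))) := by
      have h8 : (∑ b ∈ WU, b) = ∑ k : Fin r, ∑ x ∈ Finset.range (N k),
          psi e r ((k:ℕ)+1) (bseq (lam k) (s k) x) := by
        have h9 := hsum id
        simpa only [id_eq] using h9
      rw [h8]
      have hperk : ∀ k : Fin r, ∑ x ∈ Finset.range (N k),
          psi e r ((k:ℕ)+1) (bseq (lam k) (s k) x)
          = (∑ x ∈ Finset.range (N k), bseq (lam k) (s k) x)
            + ((r:ℤ) - ((k:ℕ)+1)) * (e:ℤ) * (N k : ℤ)
            + ((r:ℤ) - 1) * (e:ℤ) * (∑ x ∈ Finset.range (N k),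
                ((bseq (lam k) (s k) x) / (e:ℤ))) := by
        intro k
        have hpt : ∀ x ∈ Finset.range (N k),
            psi e r ((k:ℕ)+1) (bseq (lam k) (s k) x)
            = bseq (lam k) (s k) x + ((r:ℤ) - (((k:ℕ):ℤ)+1)) * e
              + ((r:ℤ) - 1) * (e:ℤ) * ((bseq (lam k) (s k) x) / (e:ℤ)) := by
          intro x _
          exact psi_id_formula he1
        rw [Finset.sum_congr rfl hpt]
        simp only [Finset.sum_add_distrib, Finset.sum_sub_distrib, ← Finset.mul_sum,
          Finset.sum_const, Finset.card_range, nsmul_eq_mul]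
        try push_cast
        try ring
      rw [Finset.sum_congr rfl (fun k _ => hperk k)]
      simp only [Finset.sum_add_distrib, Finset.sum_sub_distrib, ← Finset.mul_sum]
      try push_cast
      try ring
    rw [hstep3]
    have hNval : ∑ k : Fin r, ((r:ℤ) - ((k:ℕ)+1)) * (e:ℤ) * (N k : ℤ)
        = ∑ k : Fin r, ((r:ℤ) - ((k:ℕ)+1)) * (e:ℤ) * (s k - (e:ℤ)*m0) := by
      apply Finset.sum_congr rfl
      intro k _
      rw [hNk k]
    rw [hNval, hNU]
/-! ### The window sums only depend on the block data -/

lemma Qsum_eq (e r : ℕ) (he1 : 0 < e) (lam mu : Fin r → PartitionSeq) (s : Fin r → ℤ)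
    (h : MSimE e lam mu s)
    (T : Fin r → ℕ)
    (hTlam : ∀ k : Fin r, ∀ x, T k ≤ x → (lam k).part x = 0)
    (hTmu : ∀ k : Fin r, ∀ x, T k ≤ x → (mu k).part x = 0)
    (m0 : ℤ) (hm0k : ∀ k : Fin r, (e:ℤ) * m0 ≤ s k - T k) (J' : ℤ) :
    (∑ k : Fin r, ∑ x ∈ Finset.range ((s k - e*m0).toNat),
        ((bseq (lam k) (s k) x - J') / (e:ℤ)))
    = ∑ k : Fin r, ∑ x ∈ Finset.range ((s k - e*m0).toNat),
        ((bseq (mu k) (s k) x - J') / (e:ℤ)) := by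
  have hTN : ∀ k : Fin r, T k ≤ (s k - (e:ℤ)*m0).toNat := by
    intro k
    have h1 := hm0k k
    have h2 : (T k : ℤ) ≤ s k - (e:ℤ)*m0 := by omega
    omega
  set F : ℤ → ℤ := fun b => (b - J') / (e:ℤ) with hF
  have hsplit : ∀ (nu : Fin r → PartitionSeq),
      (∀ k : Fin r, ∀ x, T k ≤ x → (nu k).part x = 0) →
      ∑ k : Fin r, ∑ x ∈ Finset.range ((s k - (e:ℤ)*m0).toNat), F (bseq (nu k) (s k) x)
      = (∑ k : Fin r, ∑ x ∈ Finset.range (T k), (F (bseq (nu k) (s k) x) - F (s k - 1 - x)))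
        + ∑ k : Fin r, ∑ x ∈ Finset.range ((s k - (e:ℤ)*m0).toNat), F (s k - 1 - x) := by
    intro nu hnu
    rw [← Finset.sum_add_distrib]
    apply Finset.sum_congr rfl
    intro k _
    exact sum_range_split F (nu k) (s k) (hnu k) (hTN k)
  have hmres : ∀ (nu : Fin r → PartitionSeq),
      (∀ k : Fin r, ∀ x, T k ≤ x → (nu k).part x = 0) →
      ((mresCount e nu s ((J' : ZMod e)) : ℤ))
      = ∑ k : Fin r, ∑ x ∈ Finset.range (T k),
          (F (bseq (nu k) (s k) x) - F (s k - 1 - x)) := by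
    intro nu hnu
    unfold mresCount
    rw [Nat.cast_sum]
    apply Finset.sum_congr rfl
    intro k _
    exact lemA e he1 (nu k) (s k) ((J' : ZMod e)) J' rfl (hnu k)
  have h1 := hsplit lam hTlam
  have h2 := hsplit mu hTmu
  rw [h1, h2, ← hmres lam hTlam, ← hmres mu hTmu, h.2 ((J' : ZMod e))]

lemma Qid_eq (e r : ℕ) (he1 : 0 < e) (lam mu : Fin r → PartitionSeq) (s : Fin r → ℤ)
    (h : MSimE e lam mu s)
    (T : Fin r → ℕ)
    (hTlam : ∀ k : Fin r, ∀ x, T k ≤ x → (lam k).part x = 0)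
    (hTmu : ∀ k : Fin r, ∀ x, T k ≤ x → (mu k).part x = 0)
    (m0 : ℤ) (hm0k : ∀ k : Fin r, (e:ℤ) * m0 ≤ s k - T k) :
    (∑ k : Fin r, ∑ x ∈ Finset.range ((s k - e*m0).toNat), bseq (lam k) (s k) x)
    = ∑ k : Fin r, ∑ x ∈ Finset.range ((s k - e*m0).toNat), bseq (mu k) (s k) x := by
  have hTN : ∀ k : Fin r, T k ≤ (s k - (e:ℤ)*m0).toNat := by
    intro k
    have h1 := hm0k k
    have h2 : (T k : ℤ) ≤ s k - (e:ℤ)*m0 := by omega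
    omega
  have hsplit : ∀ (nu : Fin r → PartitionSeq),
      (∀ k : Fin r, ∀ x, T k ≤ x → (nu k).part x = 0) →
      ∑ k : Fin r, ∑ x ∈ Finset.range ((s k - (e:ℤ)*m0).toNat), bseq (nu k) (s k) x
      = (∑ k : Fin r, ((psize (nu k) : ℤ)))
        + ∑ k : Fin r, ∑ x ∈ Finset.range ((s k - (e:ℤ)*m0).toNat), (s k - 1 - (x:ℤ)) := by
    intro nu hnu
    rw [← Finset.sum_add_distrib]
    apply Finset.sum_congr rfl
    intro k _
    have hs := sum_range_split (fun b => b) (nu k) (s k) (hnu k) (hTN k)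
    rw [hs, ← psize_eq_cfun (hnu k)]
  have h1 := hsplit lam hTlam
  have h2 := hsplit mu hTmu
  rw [h1, h2]
  have h3 : ∑ k : Fin r, ((psize (lam k) : ℤ)) = ∑ k : Fin r, ((psize (mu k) : ℤ)) := by
    rw [← Nat.cast_sum, ← Nat.cast_sum, h.1]
  rw [h3]

theorem stmt10 (e r : ℕ) (he : 2 ≤ e) (hr : 1 ≤ r)
    (lam mu : Fin r → PartitionSeq) (s : Fin r → ℤ)
    (h : MSimE e lam mu s) :
    (partOfBeta (uglovSet e r fun k => betaSet (lam k) (s k))).2 =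
      (partOfBeta (uglovSet e r fun k => betaSet (mu k) (s k))).2 ∧
    SimE e (partOfBeta (uglovSet e r fun k => betaSet (lam k) (s k))).1
      (partOfBeta (uglovSet e r fun k => betaSet (mu k) (s k))).1 := by
  classical
  have he1 : 0 < e := by omega
  have hr1 : 0 < r := by omega
  haveI : NeZero e := ⟨by omega⟩
  have hne : (Finset.univ : Finset (Fin r)).Nonempty := ⟨⟨0, hr1⟩, Finset.mem_univ _⟩
  choose Tl hTl using fun k : Fin r => (lam k).eventually_zero
  choose Tm hTm using fun k : Fin r => (mu k).eventually_zero
  set T : Fin r → ℕ := fun k => max (Tl k) (Tm k) with hTdef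
  have hTlam : ∀ k : Fin r, ∀ x, T k ≤ x → (lam k).part x = 0 :=
    fun k x hx => hTl k x (le_trans (le_max_left _ _) hx)
  have hTmu : ∀ k : Fin r, ∀ x, T k ≤ x → (mu k).part x = 0 :=
    fun k x hx => hTm k x (le_trans (le_max_right _ _) hx)
  obtain ⟨TUl, hTUl⟩ :=
    ((partOfBeta (uglovSet e r fun k => betaSet (lam k) (s k))).1).eventually_zero
  obtain ⟨TUm, hTUm⟩ :=
    ((partOfBeta (uglovSet e r fun k => betaSet (mu k) (s k))).1).eventually_zero
  set c1 := Finset.univ.inf' hne (fun k => s k - T k) with hc1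
  set m0 := min 0 (min c1
    (min ((partOfBeta (uglovSet e r fun k => betaSet (lam k) (s k))).2 - TUl)
         ((partOfBeta (uglovSet e r fun k => betaSet (mu k) (s k))).2 - TUm))) with hm0
  have hm0neg : m0 ≤ 0 := min_le_left _ _
  have heZ : (1:ℤ) ≤ (e:ℤ) := by exact_mod_cast he1
  have hrZ : (1:ℤ) ≤ (r:ℤ) := by exact_mod_cast hr1
  have hem0 : (e:ℤ) * m0 ≤ m0 := by nlinarith
  have hrem0 : (r:ℤ) * e * m0 ≤ m0 := by nlinarith
  have hm0k : ∀ k : Fin r, (e:ℤ) * m0 ≤ s k - T k := by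
    intro k
    have h1 : m0 ≤ c1 := le_trans (min_le_right _ _) (min_le_left _ _)
    have h2 : c1 ≤ s k - T k := by
      rw [hc1]; exact Finset.inf'_le _ (Finset.mem_univ k)
    omega
  have hm0Ul : (r:ℤ) * e * m0 ≤
      (partOfBeta (uglovSet e r fun k => betaSet (lam k) (s k))).2 - TUl := by
    have h1 : m0 ≤ (partOfBeta (uglovSet e r fun k => betaSet (lam k) (s k))).2 - TUl :=
      le_trans (min_le_right _ _) (le_trans (min_le_right _ _) (min_le_left _ _))
    omega
  have hm0Um : (r:ℤ) * e * m0 ≤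
      (partOfBeta (uglovSet e r fun k => betaSet (mu k) (s k))).2 - TUm := by
    have h1 : m0 ≤ (partOfBeta (uglovSet e r fun k => betaSet (mu k) (s k))).2 - TUm :=
      le_trans (min_le_right _ _) (le_trans (min_le_right _ _) (min_le_right _ _))
    omega
  obtain ⟨hSl, hResl, hSizel⟩ := perSide e r he hr lam s T hTlam TUl hTUl m0 hm0k hm0Ul
  obtain ⟨hSm, hResm, hSizem⟩ := perSide e r he hr mu s T hTmu TUm hTUm m0 hm0k hm0Um
  have hQ : ∀ J' : ℤ,
      (∑ k : Fin r, ∑ x ∈ Finset.range ((s k - e*m0).toNat),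
        ((bseq (lam k) (s k) x - J') / (e:ℤ)))
      = ∑ k : Fin r, ∑ x ∈ Finset.range ((s k - e*m0).toNat),
        ((bseq (mu k) (s k) x - J') / (e:ℤ)) :=
    fun J' => Qsum_eq e r he1 lam mu s h T hTlam hTmu m0 hm0k J'
  have hQ0 : (∑ k : Fin r, ∑ x ∈ Finset.range ((s k - e*m0).toNat),
        ((bseq (lam k) (s k) x) / (e:ℤ)))
      = ∑ k : Fin r, ∑ x ∈ Finset.range ((s k - e*m0).toNat),
        ((bseq (mu k) (s k) x) / (e:ℤ)) := by
    have h1 := hQ 0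
    simpa only [sub_zero] using h1
  have hQid := Qid_eq e r he1 lam mu s h T hTlam hTmu m0 hm0k
  refine ⟨hSl.trans hSm.symm, ?_, ?_⟩
  · -- sizes
    have h1 : ((psize (partOfBeta (uglovSet e r fun k => betaSet (lam k) (s k))).1 : ℤ))
        = ((psize (partOfBeta (uglovSet e r fun k => betaSet (mu k) (s k))).1 : ℤ)) := by
      rw [hSizel, hSizem, hQid, hQ0]
    exact_mod_cast h1
  · -- residue counts
    intro j
    set J' : ℕ := (j + (((∑ k, s k : ℤ)) : ZMod e)).val with hJ'
    have hJlt : J' < e := ZMod.val_lt _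
    have hcast : ((J' : ℕ) : ZMod e) = j + (((∑ k, s k : ℤ)) : ZMod e) := by
      rw [hJ']
      simp [ZMod.natCast_val, ZMod.cast_id]
    have hj : (J' : ZMod e) - (((∑ k, s k : ℤ)) : ZMod e) = j := by
      rw [hcast]; ring
    have h1 := hResl J' hJlt
    have h2 := hResm J' hJlt
    rw [hj] at h1 h2
    have h3 : ((resCount e (partOfBeta (uglovSet e r fun k => betaSet (lam k) (s k))).1 j : ℤ))
        = ((resCount e (partOfBeta (uglovSet e r fun k => betaSet (mu k) (s k))).1 j : ℤ)) := by
      rw [h1, h2, hQ (J':ℤ), hQ0]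
    exact_mod_cast h3
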